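/- Let H be a complex Hilbert space, A : H → H a bounded self-adjoint operator, and c : H → H a bounded operator with adjoint c* = -c and c ∘ c = -I, which anti-commutes with A (A ∘ c = -c ∘ A). Let l ∈ ℝ, ε > 0, and f : (0,ε) → (0,∞) a continuous function with ∫₀^ε f(x) dx = +∞. If φ : (0,ε) → H is continuously differentiable, satisfies the equation φ'(x) + A(φ(x)) = -l·f(x)·c(φ(x)) for all x ∈ (0,ε), and ∫₀^ε ‖φ(x)‖² f(x) dx < ∞, then φ(x) = 0 for all x ∈ (0,ε). -/

import Mathlib

open MeasureTheory Set Filter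
set_option synthInstance.maxHeartbeats 1000000
set_option maxHeartbeats 1000000

/-- Lemma 2.6 (Lemma `lc`): if `A` is a bounded self-adjoint operator on a complex Hilbert
space `H`, `c` is a bounded skew-adjoint involution (`c* = -c`, `c² = -1`) anti-commuting
with `A`, `l` is real, and `f : (0,ε) → (0,∞)` is continuous with divergent integral, then
the equation `φ' + Aφ = -l f c φ` has no nonzero solution square-integrable w.r.t. `f dx`. -/
theorem dirac_no_L2_eigenspinor_abstract
    {H : Type*} [NormedAddCommGroup H] [InnerProductSpace ℂ H] [CompleteSpace H]
    (A c : H →L[ℂ] H) (hA : IsSelfAdjoint A)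
    (hc_skew : ContinuousLinearMap.adjoint c = -c)
    (hc_sq : c ∘L c = -ContinuousLinearMap.id ℂ H)
    (hAc : A ∘L c = -(c ∘L A))
    (l : ℝ) (ε : ℝ) (hε : 0 < ε)
    (f : ℝ → ℝ) (hf_cont : ContinuousOn f (Set.Ioo 0 ε))
    (hf_pos : ∀ x ∈ Set.Ioo 0 ε, 0 < f x)
    (hf_div : ∫⁻ x in Set.Ioo 0 ε, ENNReal.ofReal (f x) = ⊤)
    (φ : ℝ → H)
    (hφ_ode : ∀ x ∈ Set.Ioo 0 ε,
      HasDerivAt φ (-(A (φ x)) - ((l * f x : ℝ) : ℂ) • c (φ x)) x)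
    (hφ_deriv_cont : ContinuousOn (deriv φ) (Set.Ioo 0 ε))
    (hφ_L2 : ∫⁻ x in Set.Ioo 0 ε, ENNReal.ofReal (‖φ x‖ ^ 2 * f x) < ⊤) :
    ∀ x ∈ Set.Ioo 0 ε, φ x = 0 := by
  letI : InnerProductSpace ℝ H := InnerProductSpace.complexToReal
  -- basic facts about the real inner product
  have rinner : ∀ v w : H, (inner ℝ v w : ℝ) = (inner ℂ v w : ℂ).re := fun v w => rfl
  have smulre : ∀ (r : ℝ) (v w : H), (inner ℝ ((r:ℂ) • v) w : ℝ) = r * (inner ℝ v w : ℝ) := by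
    intro r v w
    rw [rinner, rinner, inner_smul_left]
    simp [Complex.conj_ofReal]
  -- `Re ⟪c v, v⟫ = 0` since `c` is skew-adjoint
  have smulre' : ∀ (r : ℝ) (v w : H), (inner ℝ v ((r:ℂ) • w) : ℝ) = r * (inner ℝ v w : ℝ) := by
    intro r v w
    rw [rinner, rinner, inner_smul_right]
    simp
  have hc_re : ∀ v : H, (inner ℝ (c v) v : ℝ) = 0 := by
    intro v
    have h1 : (inner ℂ v (c v) : ℂ) = -(inner ℂ (c v) v : ℂ) := by
      have h := ContinuousLinearMap.adjoint_inner_left c v v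
      rw [hc_skew] at h
      simpa [inner_neg_left] using h.symm
    have h2 : (inner ℂ (c v) v : ℂ) = -(starRingEnd ℂ) (inner ℂ (c v) v : ℂ) := by
      rw [inner_conj_symm, h1, neg_neg]
    have h3 := congrArg Complex.re h2
    rw [rinner]
    simp only [Complex.neg_re, Complex.conj_re] at h3
    linarith
  set K : ℝ := ‖A‖ with hKdef
  have hK0 : (0:ℝ) ≤ K := norm_nonneg _
  set g : ℝ → ℝ := fun x => ‖φ x‖ ^ 2 with hgdef
  have hg0 : ∀ x, 0 ≤ g x := fun x => sq_nonneg _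
  -- derivative of g
  have hg_deriv : ∀ x ∈ Set.Ioo 0 ε,
      HasDerivAt g (-(2 * (inner ℝ (A (φ x)) (φ x) : ℝ))) x := by
    intro x hx
    have h1 := (hφ_ode x hx).inner ℝ (hφ_ode x hx)
    have hgeq : g = fun t => (inner ℝ (φ t) (φ t) : ℝ) :=
      funext fun t => (real_inner_self_eq_norm_sq _).symm
    have h2 : (inner ℝ (φ x) (-(A (φ x)) - ((l * f x : ℝ):ℂ) • c (φ x)) : ℝ)
        + (inner ℝ (-(A (φ x)) - ((l * f x : ℝ):ℂ) • c (φ x)) (φ x) : ℝ)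
        = -(2 * (inner ℝ (A (φ x)) (φ x) : ℝ)) := by
      have hc_re' : (inner ℝ (φ x) (c (φ x)) : ℝ) = 0 := by
        rw [real_inner_comm]; exact hc_re (φ x)
      rw [inner_sub_right, inner_neg_right, smulre', inner_sub_left, inner_neg_left, smulre,
        hc_re, hc_re', real_inner_comm (φ x) (A (φ x))]
      ring
    rw [hgeq, ← h2]
    exact h1
  -- bound on the derivative
  have hbound : ∀ x ∈ Set.Ioo 0 ε, |(inner ℝ (A (φ x)) (φ x) : ℝ)| ≤ K * g x := by
    intro x hx
    calc |(inner ℝ (A (φ x)) (φ x) : ℝ)| ≤ ‖A (φ x)‖ * ‖φ x‖ := abs_real_inner_le_norm _ _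
      _ ≤ (K * ‖φ x‖) * ‖φ x‖ :=
        mul_le_mul_of_nonneg_right (A.le_opNorm _) (norm_nonneg _)
      _ = K * g x := by rw [hgdef]; ring
  -- the two auxiliary monotone functions
  set h : ℝ → ℝ := fun x => Real.exp ((2*K)*x) * g x with hhdef
  set k : ℝ → ℝ := fun x => Real.exp (-(2*K)*x) * g x with hkdef
  have hh_deriv : ∀ x ∈ Set.Ioo 0 ε, HasDerivAt h
      (Real.exp ((2*K)*x) * (2*K) * g x
        + Real.exp ((2*K)*x) * (-(2 * (inner ℝ (A (φ x)) (φ x) : ℝ)))) x := by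
    intro x hx
    have H1 := (((hasDerivAt_id x).const_mul (2*K)).exp).mul (hg_deriv x hx)
    simp only [id_eq, mul_one] at H1
    exact H1
  have hk_deriv : ∀ x ∈ Set.Ioo 0 ε, HasDerivAt k
      (Real.exp (-(2*K)*x) * (-(2*K)) * g x
        + Real.exp (-(2*K)*x) * (-(2 * (inner ℝ (A (φ x)) (φ x) : ℝ)))) x := by
    intro x hx
    have H1 := (((hasDerivAt_id x).const_mul (-(2*K))).exp).mul (hg_deriv x hx)
    simp only [id_eq, mul_one] at H1
    exact H1
  have hh_mono : MonotoneOn h (Set.Ioo 0 ε) := by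
    apply monotoneOn_of_deriv_nonneg (convex_Ioo 0 ε)
    · exact fun x hx => ((hh_deriv x hx).continuousAt).continuousWithinAt
    · intro x hx
      rw [interior_Ioo] at hx
      exact ((hh_deriv x hx).differentiableAt).differentiableWithinAt
    · intro x hx
      rw [interior_Ioo] at hx
      rw [(hh_deriv x hx).deriv]
      have hb := hbound x hx
      have he := Real.exp_pos ((2*K)*x)
      nlinarith [abs_le.mp hb]
  have hk_anti : AntitoneOn k (Set.Ioo 0 ε) := by
    apply antitoneOn_of_deriv_nonpos (convex_Ioo 0 ε)
    · exact fun x hx => ((hk_deriv x hx).continuousAt).continuousWithinAt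
    · intro x hx
      rw [interior_Ioo] at hx
      exact ((hk_deriv x hx).differentiableAt).differentiableWithinAt
    · intro x hx
      rw [interior_Ioo] at hx
      rw [(hk_deriv x hx).deriv]
      have hb := hbound x hx
      have he := Real.exp_pos (-(2*K)*x)
      nlinarith [abs_le.mp hb]
  -- suppose φ is nonzero somewhere
  intro x₀ hx₀
  by_contra hne
  have hgx₀ : 0 < g x₀ := pow_pos (norm_pos_iff.mpr hne) 2
  set m : ℝ := Real.exp (-((2*K)*ε)) * g x₀ with hmdef
  have hm : 0 < m := mul_pos (Real.exp_pos _) hgx₀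
  -- uniform lower bound on g
  have glow : ∀ x ∈ Set.Ioo 0 ε, m ≤ g x := by
    intro x hx
    rcases le_total x x₀ with hle | hle
    · have e1 : k x₀ ≤ k x := hk_anti hx hx₀ hle
      rw [hkdef] at e1
      simp only at e1
      have hep : (0:ℝ) < Real.exp (-(2*K)*x₀) := Real.exp_pos _
      have hgx : Real.exp ((2*K)*(x - x₀)) * g x₀ ≤ g x := by
        have e2 : Real.exp ((2*K)*x) * (Real.exp (-(2*K)*x₀) * g x₀)
            ≤ Real.exp ((2*K)*x) * (Real.exp (-(2*K)*x) * g x) :=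
          mul_le_mul_of_nonneg_left e1 (Real.exp_pos _).le
        calc Real.exp ((2*K)*(x - x₀)) * g x₀
            = Real.exp ((2*K)*x) * (Real.exp (-(2*K)*x₀) * g x₀) := by
              rw [← mul_assoc, ← Real.exp_add]; ring_nf
          _ ≤ Real.exp ((2*K)*x) * (Real.exp (-(2*K)*x) * g x) := e2
          _ = Real.exp ((2*K)*x + -(2*K)*x) * g x := by rw [← mul_assoc, ← Real.exp_add]
          _ = g x := by ring_nf; simp
      refine le_trans ?_ hgx
      rw [hmdef]
      apply mul_le_mul_of_nonneg_right _ (hg0 x₀)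
      apply Real.exp_le_exp.mpr
      nlinarith [hx.1, hx₀.2]
    · have e1 : h x₀ ≤ h x := hh_mono hx₀ hx hle
      rw [hhdef] at e1
      simp only at e1
      have hgx : Real.exp ((2*K)*(x₀ - x)) * g x₀ ≤ g x := by
        have e2 : Real.exp (-(2*K)*x) * (Real.exp ((2*K)*x₀) * g x₀)
            ≤ Real.exp (-(2*K)*x) * (Real.exp ((2*K)*x) * g x) :=
          mul_le_mul_of_nonneg_left e1 (Real.exp_pos _).le
        calc Real.exp ((2*K)*(x₀ - x)) * g x₀
            = Real.exp (-(2*K)*x) * (Real.exp ((2*K)*x₀) * g x₀) := by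
              rw [← mul_assoc, ← Real.exp_add]; ring_nf
          _ ≤ Real.exp (-(2*K)*x) * (Real.exp ((2*K)*x) * g x) := e2
          _ = Real.exp (-(2*K)*x + (2*K)*x) * g x := by rw [← mul_assoc, ← Real.exp_add]
          _ = g x := by ring_nf; simp
      refine le_trans ?_ hgx
      rw [hmdef]
      apply mul_le_mul_of_nonneg_right _ (hg0 x₀)
      apply Real.exp_le_exp.mpr
      nlinarith [hx₀.1, hx.2]
  -- contradiction with square-integrability
  have hint : (⊤ : ENNReal) ≤ ∫⁻ x in Set.Ioo 0 ε, ENNReal.ofReal (‖φ x‖ ^ 2 * f x) := by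
    have step1 : (⊤ : ENNReal) = ENNReal.ofReal m * ∫⁻ x in Set.Ioo 0 ε, ENNReal.ofReal (f x) := by
      rw [hf_div, ENNReal.mul_top (by simpa using (ENNReal.ofReal_pos.mpr hm).ne')]
    rw [step1, ← lintegral_const_mul' _ _ ENNReal.ofReal_ne_top]
    apply lintegral_mono_ae
    rw [ae_restrict_iff' measurableSet_Ioo]
    filter_upwards with x hx
    rw [← ENNReal.ofReal_mul hm.le]
    apply ENNReal.ofReal_le_ofReal
    exact mul_le_mul_of_nonneg_right (glow x hx) (hf_pos x hx).le
  rw [top_le_iff] at hint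
  rw [hint] at hφ_L2
  exact lt_irrefl _ hφ_L2
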